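/- Let d ∈ ℕ and let b, b' : {0,…,d} → ℝ be not both identically zero, with Σ_{j=0}^d b_j = 0 and Σ_{j=0}^d b'_j = 0. Define p : ℕ → ℂ by p(β) := Σ_{j=0}^d 2(b_j − i b'_j)/(β + j + 1) and q : ℕ → ℂ by q(α) := −Σ_{j=0}^d 2(b_j + i b'_j)/(α + d − j + 1). Let Q be the ℂ-linear endomorphism of the polynomial ring ℂ[z,w] determined on monomials by Q(z^α w^β) := p(β)·z^α w^{β+d+1} + q(α)·z^{α+d+1} w^β. Then for every natural number ℓ ≥ 8d, the restriction of Q to the subspace spanned by the monomials z^α w^β with α + β ≤ ℓ has rank (over ℂ) at least ℓ²/16. -/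

import Mathlib

open Polynomial in
lemma crsym_zero_count (d : ℕ) (c : Fin (d+1) → ℂ) (hc : c ≠ 0) (p : ℕ → ℂ)
    (hp : ∀ β : ℕ, p β = ∑ j : Fin (d+1), c j / ((β : ℂ) + ((j:ℕ):ℂ) + 1)) (M : ℕ) :
    ((Finset.range M).filter (fun β => p β = 0)).card ≤ d := by
  classical
  set N : Polynomial ℂ :=
    ∑ j : Fin (d+1), C (c j) * ∏ k ∈ Finset.univ.erase j, (X + C (((k:ℕ):ℂ) + 1)) with hN
  have hden : ∀ (β : ℕ) (j : Fin (d+1)), ((β : ℂ) + ((j:ℕ):ℂ) + 1) ≠ 0 := by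
    intro β j
    have h1 : (((β + j + 1 : ℕ)) : ℂ) ≠ 0 := by exact_mod_cast (Nat.succ_ne_zero (β + j))
    push_cast at h1
    exact h1
  have heval : ∀ β : ℕ, N.eval (β : ℂ) =
      (∏ k : Fin (d+1), ((β : ℂ) + ((k:ℕ):ℂ) + 1)) * p β := by
    intro β
    rw [hp, Finset.mul_sum, hN, eval_finset_sum]
    refine Finset.sum_congr rfl fun j _ => ?_
    rw [eval_mul, eval_C, eval_prod]
    simp only [eval_add, eval_X, eval_C, ← add_assoc]
    rw [← Finset.mul_prod_erase _ _ (Finset.mem_univ j)]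
    field_simp [hden β j]
  -- N ≠ 0
  obtain ⟨j₀, hj₀⟩ : ∃ j, c j ≠ 0 := Function.ne_iff.mp hc
  have hNne : N ≠ 0 := by
    intro h0
    apply hj₀
    have he : N.eval (-(((j₀:ℕ):ℂ) + 1)) = c j₀ * ∏ k ∈ Finset.univ.erase j₀,
        (-(((j₀:ℕ):ℂ) + 1) + (((k:ℕ):ℂ) + 1)) := by
      rw [hN, eval_finset_sum]
      rw [Finset.sum_eq_single j₀]
      · rw [eval_mul, eval_C, eval_prod]; simp only [eval_add, eval_X, eval_C]
      · intro j _ hjne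
        rw [eval_mul, eval_prod]
        have : j₀ ∈ Finset.univ.erase j := Finset.mem_erase.mpr ⟨fun h => hjne h.symm, Finset.mem_univ _⟩
        rw [Finset.prod_eq_zero this (by simp only [eval_add, eval_X, eval_C]; ring), mul_zero]
      · intro h; exact absurd (Finset.mem_univ j₀) h
    rw [h0, eval_zero] at he
    have hprod : ∏ k ∈ Finset.univ.erase j₀,
        (-(((j₀:ℕ):ℂ) + 1) + (((k:ℕ):ℂ) + 1)) ≠ 0 := by
      rw [Finset.prod_ne_zero_iff]
      intro k hk
      have hkj : (k:ℕ) ≠ (j₀:ℕ) := fun h => (Finset.mem_erase.mp hk).1 (Fin.val_injective h)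
      have : ((k:ℕ):ℂ) ≠ ((j₀:ℕ):ℂ) := fun h => hkj (Nat.cast_injective h)
      intro h; apply this
      have : ((k:ℕ):ℂ) = ((j₀:ℕ):ℂ) := by linear_combination h
      exact this
    rcases mul_eq_zero.mp he.symm with h | h
    · exact h
    · exact absurd h hprod
  have hdeg : N.natDegree ≤ d := by
    rw [hN]
    refine Polynomial.natDegree_sum_le_of_forall_le _ _ fun j _ => ?_
    refine le_trans (natDegree_C_mul_le _ _) ?_
    refine le_trans (Polynomial.natDegree_prod_le _ _) ?_
    calc ∑ k ∈ Finset.univ.erase j, (X + C (((k:ℕ):ℂ) + 1)).natDegree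
        ≤ ∑ _k ∈ Finset.univ.erase j, 1 := by
          refine Finset.sum_le_sum fun k _ => ?_
          rw [natDegree_X_add_C]
      _ = d := by
          simp [Finset.card_erase_of_mem]
  -- injection into roots
  have hcard : ((Finset.range M).filter (fun β => p β = 0)).card ≤ N.roots.toFinset.card := by
    refine Finset.card_le_card_of_injOn (fun β : ℕ => (β : ℂ)) ?_ ?_
    · intro β hβ
      rw [Finset.mem_coe, Finset.mem_filter] at hβ
      rw [Finset.mem_coe, Multiset.mem_toFinset, Polynomial.mem_roots hNne]
      show N.IsRoot ((β : ℕ) : ℂ)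
      rw [Polynomial.IsRoot, heval, hβ.2, mul_zero]
    · intro a _ b _ h
      exact Nat.cast_injective h
  calc ((Finset.range M).filter (fun β => p β = 0)).card
      ≤ N.roots.toFinset.card := hcard
    _ ≤ Multiset.card N.roots := Multiset.toFinset_card_le _
    _ ≤ N.natDegree := Polynomial.card_roots' N
    _ ≤ d := hdeg

noncomputable def crmexp (a b : ℕ) : Fin 2 →₀ ℕ := Finsupp.single 0 a + Finsupp.single 1 b

lemma crmexp_apply0 (a b : ℕ) : crmexp a b 0 = a := by
  simp [crmexp, Finsupp.single_apply]

lemma crmexp_apply1 (a b : ℕ) : crmexp a b 1 = b := by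
  simp [crmexp, Finsupp.single_apply]

lemma crmexp_inj {a b a' b' : ℕ} (h : crmexp a b = crmexp a' b') : a = a' ∧ b = b' := by
  constructor
  · rw [← crmexp_apply0 a b, h, crmexp_apply0]
  · rw [← crmexp_apply1 a b, h, crmexp_apply1]

lemma crsym_indep (d : ℕ) (p q : ℕ → ℂ)
    (Q : MvPolynomial (Fin 2) ℂ →ₗ[ℂ] MvPolynomial (Fin 2) ℂ)
    (hQ : ∀ α β : ℕ, Q (MvPolynomial.monomial (crmexp α β) (1 : ℂ)) =
      p β • MvPolynomial.monomial (crmexp α (β + d + 1)) (1 : ℂ) +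
      q α • MvPolynomial.monomial (crmexp (α + d + 1) β) (1 : ℂ))
    (S : Set (ℕ × ℕ)) (hS : ∀ s ∈ S, p s.2 ≠ 0) :
    LinearIndependent ℂ ((fun ab : ℕ × ℕ =>
      Q (MvPolynomial.monomial (crmexp ab.1 ab.2) (1 : ℂ))) ∘ ((↑) : S → ℕ × ℕ)) := by
  classical
  rw [linearIndependent_comp_subtype_iff, linearIndepOn_iff]
  intro l hl hsum
  rw [Finsupp.linearCombination_apply, Finsupp.sum] at hsum
  rw [Finsupp.mem_supported] at hl
  -- main claim
  have H : ∀ α β : ℕ, l (α, β) = 0 := by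
    intro α
    induction α using Nat.strong_induction_on with
    | _ α IH =>
      intro β
      by_cases hmem : (α, β) ∈ l.support
      case neg => exact Finsupp.notMem_support_iff.mp hmem
      -- coefficient extraction at crmexp α (β + d + 1)
      have hc := congrArg (MvPolynomial.coeff (crmexp α (β + d + 1))) hsum
      rw [MvPolynomial.coeff_sum, MvPolynomial.coeff_zero] at hc
      have hco : ∀ s : ℕ × ℕ,
          MvPolynomial.coeff (crmexp α (β + d + 1)) (l s • Q (MvPolynomial.monomial (crmexp s.1 s.2) (1:ℂ))) =
          (if s = (α, β) then l s * p s.2 else 0) +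
          (if s.1 + (d + 1) = α ∧ s.2 = β + (d + 1) then l s * q s.1 else 0) := by
        intro s
        rw [hQ, smul_add, MvPolynomial.coeff_add, MvPolynomial.coeff_smul, MvPolynomial.coeff_smul,
          MvPolynomial.coeff_smul, MvPolynomial.coeff_smul, MvPolynomial.coeff_monomial,
          MvPolynomial.coeff_monomial]
        by_cases h1 : s = (α, β)
        · have hne2 : ¬ (crmexp (s.1 + d + 1) s.2 = crmexp α (β + d + 1)) := by
            intro h; obtain ⟨ha, hb⟩ := crmexp_inj h; subst h1; omega
          rw [if_pos h1, if_neg hne2, if_pos (by rw [h1])]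
          subst h1
          simp [smul_eq_mul]
        · have hne1 : ¬ (crmexp s.1 (s.2 + d + 1) = crmexp α (β + d + 1)) := by
            intro h; obtain ⟨ha, hb⟩ := crmexp_inj h
            exact h1 (Prod.ext ha (by omega))
          rw [if_neg h1, if_neg hne1]
          by_cases h2 : s.1 + (d + 1) = α ∧ s.2 = β + (d + 1)
          · have heq : crmexp (s.1 + d + 1) s.2 = crmexp α (β + d + 1) := by
              have ha : s.1 + d + 1 = α := by omega
              rw [ha, h2.2, ← add_assoc]
            rw [if_pos h2, if_pos heq]
            simp [smul_eq_mul]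
          · rw [if_neg h2, if_neg (by
              intro h; obtain ⟨ha, hb⟩ := crmexp_inj h
              exact h2 ⟨by omega, by omega⟩)]
            simp
      rw [Finset.sum_congr rfl (fun s _ => hco s), Finset.sum_add_distrib,
        Finset.sum_ite_eq' l.support (α, β) (fun s => l s * p s.2)] at hc
      -- second sum is zero
      have hzero : (∑ s ∈ l.support,
          if s.1 + (d + 1) = α ∧ s.2 = β + (d + 1) then l s * q s.1 else 0) = 0 := by
        rcases Nat.lt_or_ge α (d + 1) with hlt | hge
        · refine Finset.sum_eq_zero fun s _ => if_neg ?_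
          rintro ⟨h1, -⟩; omega
        · obtain ⟨a, rfl⟩ : ∃ a, α = a + (d + 1) := ⟨α - (d + 1), by omega⟩
          have hcong : ∀ s ∈ l.support,
              (if s.1 + (d + 1) = a + (d + 1) ∧ s.2 = β + (d + 1) then l s * q s.1 else 0) =
              (if s = (a, β + (d + 1)) then l s * q s.1 else 0) := by
            intro s _
            refine if_congr ?_ rfl rfl
            constructor
            · rintro ⟨h1, h2⟩; exact Prod.ext (by omega) h2
            · rintro rfl; exact ⟨rfl, rfl⟩
          rw [Finset.sum_congr rfl hcong,
            Finset.sum_ite_eq' l.support (a, β + (d + 1)) (fun s => l s * q s.1)]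
          have : l (a, β + (d + 1)) = 0 := IH a (by omega) (β + (d + 1))
          simp [this]
      rw [hzero, add_zero, if_pos hmem] at hc
      have hpβ : p β ≠ 0 := hS (α, β) (hl hmem)
      exact (mul_eq_zero.mp hc).resolve_right hpβ
  ext s
  rw [Finsupp.coe_zero, Pi.zero_apply, ← H s.1 s.2]

/-- **Quantitative rank bound for the operator `𝐐_B` (Wendl's condition for
Cauchy–Riemann symbols).** Let `B` be a nonzero homogeneous degree-`d` element of the
kernel of the polynomial Petri map, encoded by coefficients `b, b'` with
`∑ b = ∑ b' = 0`, not both zero. Let `Q` be the `ℂ`-linear endomorphism of `ℂ[z,w]`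
with `Q(z^α w^β) = p β • z^α w^{β+d+1} + q α • z^{α+d+1} w^β`. Then for `ℓ ≥ 8d` the
restriction of `Q` to the span of the monomials `z^α w^β` with `α + β ≤ ℓ` has rank at
least `ℓ²/16`. -/
theorem stmt_16 (d : ℕ) (b b' : Fin (d + 1) → ℝ) (hne : ¬(b = 0 ∧ b' = 0))
    (hb : ∑ j, b j = 0) (hb' : ∑ j, b' j = 0)
    (p q : ℕ → ℂ)
    (hp : ∀ β : ℕ, p β = ∑ j : Fin (d + 1),
      2 * ((b j : ℂ) - Complex.I * (b' j : ℂ)) / ((β : ℂ) + ((j : ℕ) : ℂ) + 1))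
    (hq : ∀ α : ℕ, q α = -∑ j : Fin (d + 1),
      2 * ((b j : ℂ) + Complex.I * (b' j : ℂ)) / ((α : ℂ) + (d : ℂ) - ((j : ℕ) : ℂ) + 1))
    (Q : MvPolynomial (Fin 2) ℂ →ₗ[ℂ] MvPolynomial (Fin 2) ℂ)
    (hQ : ∀ α β : ℕ,
      Q (MvPolynomial.monomial (Finsupp.single 0 α + Finsupp.single 1 β) (1 : ℂ)) =
        p β • MvPolynomial.monomial
            (Finsupp.single 0 α + Finsupp.single 1 (β + d + 1)) (1 : ℂ) +
        q α • MvPolynomial.monomial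
            (Finsupp.single 0 (α + d + 1) + Finsupp.single 1 β) (1 : ℂ))
    (ℓ : ℕ) (hℓ : 8 * d ≤ ℓ) :
    ℓ ^ 2 ≤ 16 * Module.finrank ℂ
      ↥(Submodule.map Q (Submodule.span ℂ
        ((fun ab : ℕ × ℕ =>
          (MvPolynomial.monomial (Finsupp.single 0 ab.1 + Finsupp.single 1 ab.2) (1 : ℂ) :
            MvPolynomial (Fin 2) ℂ)) '' {ab : ℕ × ℕ | ab.1 + ab.2 ≤ ℓ}))) := by
  classical
  set N := Submodule.map Q (Submodule.span ℂ
        ((fun ab : ℕ × ℕ =>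
          (MvPolynomial.monomial (Finsupp.single 0 ab.1 + Finsupp.single 1 ab.2) (1 : ℂ) :
            MvPolynomial (Fin 2) ℂ)) '' {ab : ℕ × ℕ | ab.1 + ab.2 ≤ ℓ})) with hNdef
  -- the coefficient vector c is nonzero
  have hc : (fun j : Fin (d+1) => 2 * ((b j : ℂ) - Complex.I * (b' j : ℂ))) ≠ 0 := by
    intro h0
    apply hne
    constructor <;> funext j <;>
    · have hj := congrFun h0 j
      simp only [Pi.zero_apply] at hj
      have h2 : (b j : ℂ) - Complex.I * (b' j : ℂ) = 0 := by
        rcases mul_eq_zero.mp hj with h | h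
        · norm_num at h
        · exact h
      have hre := congrArg Complex.re h2
      have him := congrArg Complex.im h2
      simp [Complex.sub_re, Complex.sub_im, Complex.mul_re, Complex.mul_im] at hre him
      simp [hre, him]
  have hp' : ∀ β : ℕ, p β = ∑ j : Fin (d+1),
      (fun j : Fin (d+1) => 2 * ((b j : ℂ) - Complex.I * (b' j : ℂ))) j
        / ((β : ℂ) + ((j:ℕ):ℂ) + 1) := hp
  -- zero count
  have hzc := crsym_zero_count d _ hc p hp' (ℓ / 2 + 1)
  -- the finset S
  set m := ℓ / 2 with hm
  set Bg : Finset ℕ := (Finset.range (m + 1)).filter (fun β => ¬ p β = 0) with hBg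
  set S : Finset (ℕ × ℕ) := (Finset.range (ℓ - m + 1)) ×ˢ Bg with hSdef
  have hQ' : ∀ α β : ℕ, Q (MvPolynomial.monomial (crmexp α β) (1 : ℂ)) =
      p β • MvPolynomial.monomial (crmexp α (β + d + 1)) (1 : ℂ) +
      q α • MvPolynomial.monomial (crmexp (α + d + 1) β) (1 : ℂ) := fun α β => hQ α β
  -- membership in N
  have hmemN : ∀ s : ℕ × ℕ, s ∈ S →
      Q (MvPolynomial.monomial (crmexp s.1 s.2) (1 : ℂ)) ∈ N := by
    intro s hs
    rw [hNdef]
    refine Submodule.mem_map_of_mem (Submodule.subset_span ?_)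
    refine ⟨s, ?_, rfl⟩
    rw [hSdef, Finset.mem_product, Finset.mem_range, hBg, Finset.mem_filter,
      Finset.mem_range] at hs
    have h1 : s.1 ≤ ℓ - m := by omega
    have h2 : s.2 ≤ m := by omega
    simp only [Set.mem_setOf_eq]
    omega
  -- linear independence
  have hli := crsym_indep d p q Q hQ' (↑S : Set (ℕ × ℕ)) (by
    intro s hs
    rw [hSdef] at hs
    simp only [Finset.coe_product, Set.mem_prod, Finset.mem_coe] at hs
    rw [hBg, Finset.mem_filter] at hs
    exact hs.2.2)
  -- finite dimensionality of N
  have hfin : ((fun ab : ℕ × ℕ =>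
      (MvPolynomial.monomial (Finsupp.single 0 ab.1 + Finsupp.single 1 ab.2) (1 : ℂ) :
        MvPolynomial (Fin 2) ℂ)) '' {ab : ℕ × ℕ | ab.1 + ab.2 ≤ ℓ}).Finite := by
    refine Set.Finite.image _ (Set.Finite.subset
      (Finset.finite_toSet ((Finset.range (ℓ+1)) ×ˢ (Finset.range (ℓ+1)))) ?_)
    intro ab hab
    simp only [Set.mem_setOf_eq] at hab
    simp only [Finset.coe_product, Set.mem_prod, Finset.mem_coe, Finset.mem_range]
    omega
  haveI : FiniteDimensional ℂ (Submodule.span ℂ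
      ((fun ab : ℕ × ℕ =>
        (MvPolynomial.monomial (Finsupp.single 0 ab.1 + Finsupp.single 1 ab.2) (1 : ℂ) :
          MvPolynomial (Fin 2) ℂ)) '' {ab : ℕ × ℕ | ab.1 + ab.2 ≤ ℓ})) :=
    FiniteDimensional.span_of_finite ℂ hfin
  haveI : FiniteDimensional ℂ N := by
    rw [hNdef]; infer_instance
  -- lift the family into N
  let w : (↑S : Set (ℕ × ℕ)) → N := fun s =>
    ⟨Q (MvPolynomial.monomial (crmexp s.1.1 s.1.2) (1 : ℂ)), hmemN s.1 s.2⟩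
  have hw : LinearIndependent ℂ w := by
    refine LinearIndependent.of_comp N.subtype ?_
    exact hli
  have hcard' := hw.fintype_card_le_finrank
  have hcard : S.card ≤ Module.finrank ℂ N := by simpa using hcard'
  -- cardinality of S
  have hScard : S.card = (ℓ - m + 1) * Bg.card := by
    rw [hSdef, Finset.card_product, Finset.card_range]
  have hBgcard : m + 1 ≤ Bg.card + d := by
    have := Finset.card_filter_add_card_filter_not
      (s := Finset.range (m + 1)) (p := fun β => p β = 0)
    rw [Finset.card_range] at this
    rw [hBg]
    omega
  -- arithmetic
  have h2m : 2 * m ≤ ℓ := by omega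
  have hle : ℓ ≤ 2 * m + 1 := by omega
  have h4d : 4 * d ≤ m := by omega
  have h4B : 3 * m + 4 ≤ 4 * Bg.card := by omega
  have hstep1 : (m + 1) * (3 * m + 4) ≤ (m + 1) * (4 * Bg.card) :=
    Nat.mul_le_mul_left _ h4B
  have hsq : ℓ ^ 2 ≤ (2 * m + 1) * (2 * m + 1) := by
    rw [pow_two]; exact Nat.mul_le_mul hle hle
  have hfinal : ℓ ^ 2 ≤ 16 * S.card := by
    rw [hScard]
    have hml : m + 1 ≤ ℓ - m + 1 := by omega
    have : (m + 1) * Bg.card ≤ (ℓ - m + 1) * Bg.card := Nat.mul_le_mul_right _ hml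
    nlinarith
  calc ℓ ^ 2 ≤ 16 * S.card := hfinal
    _ ≤ 16 * Module.finrank ℂ N := by
        exact Nat.mul_le_mul_left 16 hcard
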